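/- arXiv:1305.4591 — 2 statements merged into one kernel-verified Lean document; each statement's English description precedes it below -/
import Mathlib

section
/- A bit-flip on qubit 2 of the encoded state produces error syndrome 1001 and a phase-flipped data qubit: for every c = (c(0), c(1)) ∈ ℂ² there is a nonzero complex scalar α independent of c such that T(B₂(f(c))) = α · |1001⟩ ⊗ (c(0)|0⟩ − c(1)|1⟩); applying σ_Z to the data qubit then restores the original state. -/
open scoped BigOperators

noncomputable section

/-- The 5-qubit state space `V₅ = (Fin 5 → Fin 2) → ℂ ≅ ℂ^32` with the standard
Hermitian inner product. -/
abbrev V5 : Type := EuclideanSpace ℂ (Fin 5 → Fin 2)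

/-- The phase exponent `γ(x,y) = x(y₀+y₁+y₂) + y₀y₁ + y₀y₃ + y₁y₄ + y₂y₃ + y₂y₄ + y₃y₄`,
read modulo 2 via `(-1)^·`. -/
def gam (x : Fin 2) (y : Fin 5 → Fin 2) : ℕ :=
  x.val * ((y 0).val + (y 1).val + (y 2).val)
    + (y 0).val * (y 1).val + (y 0).val * (y 3).val + (y 1).val * (y 4).val
    + (y 2).val * (y 3).val + (y 2).val * (y 4).val + (y 3).val * (y 4).val

/-- The graph-code encoding `f : ℂ² → V₅`, `f(c)(y) = Σ_x (−1)^{γ(x,y)} c(x)`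
(normalization factors omitted). -/
def enc (c : Fin 2 → ℂ) : V5 := WithLp.toLp 2 (fun y => ∑ x : Fin 2, (-1 : ℂ) ^ gam x y * c x)

/-- The decoding phase exponent `θ`, with `z = (l₀, l₁, l₃, l₄, x̂)`. -/
def theta (y z : Fin 5 → Fin 2) : ℕ :=
  (z 4).val * ((y 0).val + (y 1).val + (y 2).val)
    + (y 0).val * (y 1).val + (y 0).val * (y 3).val + (y 1).val * (y 4).val
    + (y 2).val * (y 3).val + (y 2).val * (y 4).val + (y 3).val * (y 4).val
    + (y 0).val * (z 0).val + (y 1).val * (z 1).val + (y 3).val * (z 2).val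
    + (y 4).val * (z 3).val

/-- The graph decoding operator `T : V₅ → V₅`,
`T|y⟩ = Σ_{l₀l₁l₃l₄, x̂} (−1)^θ |l₀l₁l₃l₄x̂⟩`. -/
def dec (ψ : V5) : V5 := WithLp.toLp 2 (fun z => ∑ y : Fin 5 → Fin 2, (-1 : ℂ) ^ theta y z * ψ y)

/-- The product state `|s₀s₁s₂s₃⟩ ⊗ (a|0⟩ + b|1⟩)` in `V₅`: four syndrome qubits
followed by one data qubit. -/
def synData (s : Fin 4 → Fin 2) (a b : ℂ) : V5 :=
  WithLp.toLp 2 (fun (y : Fin 5 → Fin 2) => (if y 0 = s 0 ∧ y 1 = s 1 ∧ y 2 = s 2 ∧ y 3 = s 3 then (1 : ℂ) else 0)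
    * (if y 4 = 0 then a else b))

/-- Bit-flip (Pauli `σ_X`) on qubit `i` (0-indexed: qubit `j` of the paper is `i = j - 1`). -/
def bitFlip (i : Fin 5) (ψ : V5) : V5 := WithLp.toLp 2 (fun y => ψ (Function.update y i (1 - y i)))

/-- Phase-flip (Pauli `σ_Z`) on qubit `i` (0-indexed). -/
def phaseFlip (i : Fin 5) (ψ : V5) : V5 := WithLp.toLp 2 (fun y => (-1 : ℂ) ^ (y i).val * ψ y)

/-- Integer sign sum appearing as the coefficient of `c x` in `dec (bitFlip 1 (enc c)) z`. -/
def sgn (x : Fin 2) (z : Fin 5 → Fin 2) : ℤ :=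
  ∑ y : Fin 5 → Fin 2, (-1:ℤ) ^ (theta y z + gam x (Function.update y 1 (1 - y 1)))

set_option maxRecDepth 10000 in
lemma key : ∀ z : Fin 5 → Fin 2,
    sgn 0 z = (if z 0 = 1 ∧ z 1 = 0 ∧ z 2 = 0 ∧ z 3 = 1 ∧ z 4 = 0 then 32 else 0) ∧
    sgn 1 z = (if z 0 = 1 ∧ z 1 = 0 ∧ z 2 = 0 ∧ z 3 = 1 ∧ ¬ z 4 = 0 then (-32) else 0) := by
  decide

/-- A bit-flip on qubit 2 produces syndrome `1001` and a phase-flipped data qubit: `T(B₂ f(c)) = α |1001⟩ ⊗ (c(0)|0⟩ − c(1)|1⟩)` with `α ≠ 0` independent of `c`; applying `σ_Z` to the data qubit restores the original state. -/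
theorem bit_flip_qubit2_syndrome :
    ∃ α : ℂ, α ≠ 0 ∧ ∀ c : Fin 2 → ℂ,
      dec (bitFlip 1 (enc c)) = α • synData ![1, 0, 0, 1] (c 0) (-(c 1)) := by
  refine ⟨32, by norm_num, fun c => ?_⟩
  ext z
  have h := key z
  have lhs_eq : dec (bitFlip 1 (enc c)) z = ((sgn 0 z : ℂ)) * c 0 + ((sgn 1 z : ℂ)) * c 1 := by
    simp only [dec, bitFlip, enc, Fin.sum_univ_two, sgn, PiLp.toLp_apply]
    push_cast
    rw [Finset.sum_mul, Finset.sum_mul, ← Finset.sum_add_distrib]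
    refine Finset.sum_congr rfl fun y _ => ?_
    rw [pow_add, pow_add]
    ring
  have rhs_eq : ((32 : ℂ) • synData ![1, 0, 0, 1] (c 0) (-(c 1))) z
      = 32 * ((if z 0 = 1 ∧ z 1 = 0 ∧ z 2 = 0 ∧ z 3 = 1 then (1:ℂ) else 0)
        * (if z 4 = 0 then c 0 else -(c 1))) := by
    simp [synData]
    by_cases hS : z 0 = 1 ∧ z 1 = 0 ∧ z 2 = 0 ∧ z 3 = 1 <;> by_cases h4 : z 4 = 0 <;>
      simp [hS, h4]
  rw [lhs_eq, rhs_eq, h.1, h.2]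
  by_cases hS : z 0 = 1 ∧ z 1 = 0 ∧ z 2 = 0 ∧ z 3 = 1 <;> by_cases h4 : z 4 = 0 <;>
    simp [hS, h4]
end
end

section
/- A bit-flip on qubit 5 of the encoded state produces error syndrome 1010 and a bit-flipped data qubit: for every c = (c(0), c(1)) ∈ ℂ² there is a nonzero complex scalar α independent of c such that T(B₅(f(c))) = α · |1010⟩ ⊗ (c(0)|1⟩ + c(1)|0⟩); applying σ_X to the data qubit then restores the original state. -/
open scoped BigOperators

noncomputable section

lemma vec5_eq (y : Fin 5 → Fin 2) : y = ![y 0, y 1, y 2, y 3, y 4] := by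
  funext i; fin_cases i <;> rfl

lemma sum_pi5 (g : (Fin 5 → Fin 2) → ℂ) :
    ∑ y : Fin 5 → Fin 2, g y =
      ∑ a : Fin 2, ∑ b : Fin 2, ∑ c : Fin 2, ∑ d : Fin 2, ∑ e : Fin 2, g ![a,b,c,d,e] := by
  rw [← (Fin.consEquiv fun _ : Fin 5 => Fin 2).sum_comp, Fintype.sum_prod_type]
  refine Finset.sum_congr rfl fun a _ => ?_
  rw [← (Fin.consEquiv fun _ : Fin 4 => Fin 2).sum_comp, Fintype.sum_prod_type]
  refine Finset.sum_congr rfl fun b _ => ?_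
  rw [← (Fin.consEquiv fun _ : Fin 3 => Fin 2).sum_comp, Fintype.sum_prod_type]
  refine Finset.sum_congr rfl fun c _ => ?_
  rw [← (Fin.consEquiv fun _ : Fin 2 => Fin 2).sum_comp, Fintype.sum_prod_type]
  refine Finset.sum_congr rfl fun d _ => ?_
  rw [← (Fin.consEquiv fun _ : Fin 1 => Fin 2).sum_comp, Fintype.sum_prod_type]
  refine Finset.sum_congr rfl fun e _ => ?_
  rw [Fintype.sum_unique]
  congr 1

lemma upd4 (a b c d e v : Fin 2) :
    Function.update ![a,b,c,d,e] (4 : Fin 5) v = ![a,b,c,d,v] := by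
  funext i; fin_cases i <;> simp [Function.update]

lemma sub0' : (1 : Fin 2) - 0 = 1 := rfl
lemma sub1' : (1 : Fin 2) - 1 = 0 := rfl

set_option maxHeartbeats 2000000 in
lemma key_case (c : Fin 2 → ℂ) (z0 z1 z2 z3 z4 : Fin 2) :
    dec (bitFlip 4 (enc c)) ![z0,z1,z2,z3,z4]
      = 32 * synData ![1, 0, 1, 0] (c 1) (c 0) ![z0,z1,z2,z3,z4] := by
  unfold dec
  simp only [PiLp.toLp_apply]
  rw [sum_pi5]
  fin_cases z0 <;> fin_cases z1 <;> fin_cases z2 <;> fin_cases z3 <;> fin_cases z4 <;>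
    (simp only [Fin.sum_univ_two, bitFlip, PiLp.toLp_apply, upd4, sub0', sub1', enc]
     norm_num [theta, gam, synData, PiLp.toLp_apply] <;> simp) <;> ring

/-- A bit-flip on qubit 5 produces syndrome `1010` and a bit-flipped data qubit: `T(B₅ f(c)) = α |1010⟩ ⊗ (c(0)|1⟩ + c(1)|0⟩)` with `α ≠ 0` independent of `c`; applying `σ_X` to the data qubit restores the original state. -/
theorem bit_flip_qubit5_syndrome :
    ∃ α : ℂ, α ≠ 0 ∧ ∀ c : Fin 2 → ℂ,
      dec (bitFlip 4 (enc c)) = α • synData ![1, 0, 1, 0] (c 1) (c 0) := by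
  refine ⟨32, by norm_num, fun c => ?_⟩
  ext z
  have h := key_case c (z 0) (z 1) (z 2) (z 3) (z 4)
  rw [← vec5_eq z] at h
  simpa [PiLp.smul_apply, smul_eq_mul] using h
end
end
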